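/- Let {K_i : i ∈ I} be a family of convex cones in a Banach space X with the closed intersection property. Then the normality constant λ_N(K_i : i ∈ I) := sup{η ≥ 0 : ⋂_i (K_i + η·B_X) ⊆ (⋂_i K_i) + B_X} equals the dual normality constant λ_D(K_i° : i ∈ I) := sup{η ≥ 0 : B_{X*} # cl^{w*}co(⋃_i K_i°) ⊆ cl^{w*}co(⋃_i (K_i° # (1/η)·B_{X*}))}. -/

import Mathlib

open Set Metric
open scoped Pointwise

noncomputable section

/-- The recession cone `0⁺A = {x | A + t • x ⊆ A for all t ≥ 0}`. -/
def recCone {X : Type*} [AddCommGroup X] [Module ℝ X] (A : Set X) : Set X :=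
  {x | ∀ t : ℝ, 0 ≤ t → ∀ a ∈ A, a + t • x ∈ A}

/-- The inverse sum `B₁ # B₂`. -/
def invSum {X : Type*} [AddCommGroup X] [Module ℝ X] (B₁ B₂ : Set X) : Set X :=
  (⋃ t ∈ Set.Ioo (0:ℝ) 1, (t • B₁ ∩ (1 - t) • B₂)) ∪ (B₁ ∩ recCone B₂) ∪ (B₂ ∩ recCone B₁)

/-- The polar `A° = {x* | ⟨x*, x⟩ ≤ 1 ∀ x ∈ A}` of a set in `X`, a subset of the dual. -/
def pol {X : Type*} [NormedAddCommGroup X] [NormedSpace ℝ X] (A : Set X) :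
    Set (X →L[ℝ] ℝ) := {f | ∀ x ∈ A, f x ≤ 1}

/-- The dual cone (negative polar) `A^⊖ = {x* | ⟨x*, x⟩ ≤ 0 ∀ x ∈ A}`. -/
def dCone {X : Type*} [NormedAddCommGroup X] [NormedSpace ℝ X] (A : Set X) :
    Set (X →L[ℝ] ℝ) := {f | ∀ x ∈ A, f x ≤ 0}

/-- The weak* closure of a set of continuous linear functionals. -/
def wcl {X : Type*} [NormedAddCommGroup X] [NormedSpace ℝ X]
    (S : Set (X →L[ℝ] ℝ)) : Set (X →L[ℝ] ℝ) :=
  {f | StrongDual.toWeakDual (𝕜 := ℝ) (E := X) f ∈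
    closure (StrongDual.toWeakDual (𝕜 := ℝ) (E := X) '' S)}

/-- The set of all finite sums `Σ_{i ∈ I₀} x_i` with `x_i ∈ P i`, `I₀ ⊆ I` finite. -/
def finSums {X : Type*} [NormedAddCommGroup X] [NormedSpace ℝ X] {I : Type*}
    (P : I → Set (X →L[ℝ] ℝ)) : Set (X →L[ℝ] ℝ) :=
  {g | ∃ (s : Finset I) (x : I → (X →L[ℝ] ℝ)), (∀ i ∈ s, x i ∈ P i) ∧ g = ∑ i ∈ s, x i}

/-- The extended Jameson property `(G_η)`: every `f` in the weak* closure of the set of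
finite sums of the `P i` is a weak* limit (i.e. lies in the weak* closure) of finite sums
`Σ_{i ∈ s} x_i`, `x_i ∈ P i`, with `Σ_{i ∈ s} ‖x_i‖ ≤ (1/η) ‖f‖`. -/
def propG {X : Type*} [NormedAddCommGroup X] [NormedSpace ℝ X] {I : Type*}
    (P : I → Set (X →L[ℝ] ℝ)) (η : ℝ) : Prop :=
  ∀ f ∈ wcl (finSums P),
    f ∈ wcl {g | ∃ (s : Finset I) (x : I → (X →L[ℝ] ℝ)),
      (∀ i ∈ s, x i ∈ P i) ∧ g = ∑ i ∈ s, x i ∧ ∑ i ∈ s, ‖x i‖ ≤ (1 / η) * ‖f‖}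

/-- The normal cone `N(C, x) = {x* | ⟨x*, c − x⟩ ≤ 0 ∀ c ∈ C}`. -/
def ncone {X : Type*} [NormedAddCommGroup X] [NormedSpace ℝ X] (C : Set X) (x : X) :
    Set (X →L[ℝ] ℝ) := {f | ∀ c ∈ C, f (c - x) ≤ 0}

/-- The conical hull of a convex set `S`: `cone S = {t • s | t ≥ 0, s ∈ S}`. -/
def coneHull {X : Type*} [AddCommGroup X] [Module ℝ X] (S : Set X) : Set X :=
  {y | ∃ t : ℝ, 0 ≤ t ∧ ∃ s ∈ S, y = t • s}

end

/-! ### Auxiliary lemmas -/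

open StrongDual

section Aux

variable {X : Type*} [NormedAddCommGroup X] [NormedSpace ℝ X]

instance : LocallyConvexSpace ℝ (WeakDual ℝ X) :=
  show LocallyConvexSpace ℝ (WeakBilin (topDualPairing ℝ X)) from WeakBilin.locallyConvexSpace

theorem my_weakdual_repr (φ : WeakDual ℝ X →L[ℝ] ℝ) :
    ∃ x : X, ∀ g : WeakDual ℝ X, φ g = g x := by
  have hb : (nhds (0 : WeakDual ℝ X)).HasBasis
      ((topDualPairing ℝ X).toSeminormFamily.basisSets) _root_.id :=
    LinearMap.hasBasis_weakBilin (topDualPairing ℝ X)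
  have hU : φ ⁻¹' (Set.Ioo (-1 : ℝ) 1) ∈ nhds (0 : WeakDual ℝ X) :=
    (isOpen_Ioo.preimage φ.continuous).mem_nhds (by simp)
  obtain ⟨U, hUb, hUsub⟩ := hb.mem_iff.1 hU
  obtain ⟨s, r, hr, rfl⟩ := ((topDualPairing ℝ X).toSeminormFamily.basisSets_iff).1 hUb
  have key : ∀ g : WeakDual ℝ X, (∀ x ∈ s, g x = 0) → φ g = 0 := by
    intro g hg
    by_contra hne
    have habs : ∀ c : ℝ, |φ (c • g)| < 1 := by
      intro c
      have hmem : (c • g) ∈ Seminorm.ball (s.sup ((topDualPairing ℝ X).toSeminormFamily)) 0 r := by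
        refine (Seminorm.mem_ball_zero _).2 ?_
        refine Seminorm.finset_sup_apply_lt hr ?_
        intro i hi
        show ‖(c • g) i‖ < r
        have hgi : (c • g) i = c * g i := rfl
        rw [hgi, hg i hi, mul_zero, norm_zero]
        exact hr
      have := hUsub hmem
      simp only [Set.mem_preimage, Set.mem_Ioo] at this
      rw [abs_lt]; exact this
    have h2 := habs (2 / φ g)
    rw [map_smul] at h2
    simp only [smul_eq_mul] at h2
    rw [div_mul_cancel₀ 2 hne] at h2
    norm_num at h2
  classical
  let L : s → (WeakDual ℝ X) →ₗ[ℝ] ℝ := fun x => (topDualPairing ℝ X).flip (x : X)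
  have hker : ⨅ x : s, LinearMap.ker (L x) ≤ LinearMap.ker (φ : WeakDual ℝ X →ₗ[ℝ] ℝ) := by
    intro g hg
    simp only [Submodule.mem_iInf, LinearMap.mem_ker] at hg ⊢
    exact key g (fun x hx => hg ⟨x, hx⟩)
  have hspan := mem_span_of_iInf_ker_le_ker hker
  obtain ⟨c, hc⟩ := (Submodule.mem_span_range_iff_exists_fun ℝ).1 hspan
  refine ⟨∑ x : s, c x • (x : X), ?_⟩
  intro g
  have h1 := LinearMap.congr_fun hc g
  simp only [LinearMap.coe_sum, Finset.sum_apply, LinearMap.smul_apply, smul_eq_mul] at h1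
  have h3 : φ g = ∑ x : s, c x * (L x) g := h1.symm
  rw [h3, map_sum]
  refine Finset.sum_congr rfl ?_
  intro x _
  have : g (c x • (x : X)) = c x • g (x : X) := map_smul g _ _
  rw [this]
  rfl

lemma subset_wcl (S : Set (X →L[ℝ] ℝ)) : S ⊆ wcl S := by
  intro f hf
  show toWeakDual (𝕜 := ℝ) (E := X) f ∈ closure (toWeakDual (𝕜 := ℝ) (E := X) '' S)
  exact subset_closure (Set.mem_image_of_mem _ hf)

lemma wcl_mono {S T : Set (X →L[ℝ] ℝ)} (h : S ⊆ T) : wcl S ⊆ wcl T := by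
  intro f hf
  show toWeakDual (𝕜 := ℝ) (E := X) f ∈ closure (toWeakDual (𝕜 := ℝ) (E := X) '' T)
  exact closure_mono (Set.image_mono h) hf

lemma wcl_forall_le {S : Set (X →L[ℝ] ℝ)} {x : X} {c : ℝ} (h : ∀ g ∈ S, g x ≤ c) :
    ∀ f ∈ wcl S, f x ≤ c := by
  intro f hf
  have hC : IsClosed {a : WeakDual ℝ X | a x ≤ c} :=
    isClosed_le (WeakDual.eval_continuous x) continuous_const
  have hsub : closure (toWeakDual (𝕜 := ℝ) (E := X) '' S) ⊆ {a : WeakDual ℝ X | a x ≤ c} := by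
    refine closure_minimal ?_ hC
    rintro _ ⟨g, hg, rfl⟩
    exact h g hg
  exact hsub hf

lemma smul_mem_wcl {S : Set (X →L[ℝ] ℝ)} (hS : ∀ t : ℝ, 0 < t → ∀ g ∈ S, t • g ∈ S)
    {t : ℝ} (ht : 0 < t) {f : X →L[ℝ] ℝ} (hf : f ∈ wcl S) : t • f ∈ wcl S := by
  have hc : Continuous fun a : WeakDual ℝ X => t • a := continuous_const_smul t
  have hf' : toWeakDual (𝕜 := ℝ) (E := X) (t • f)
      ∈ (fun a : WeakDual ℝ X => t • a) '' closure (toWeakDual (𝕜 := ℝ) (E := X) '' S) :=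
    ⟨toWeakDual f, hf, rfl⟩
  have h2 := image_closure_subset_closure_image hc hf'
  show toWeakDual (𝕜 := ℝ) (E := X) (t • f) ∈ closure (toWeakDual (𝕜 := ℝ) (E := X) '' S)
  refine closure_mono ?_ h2
  rintro _ ⟨_, ⟨g, hg, rfl⟩, rfl⟩
  exact Set.mem_image_of_mem _ (hS t ht g hg)

lemma add_mem_wcl {S : Set (X →L[ℝ] ℝ)} (hS : ∀ u ∈ S, ∀ v ∈ S, u + v ∈ S)
    {f g : X →L[ℝ] ℝ} (hf : f ∈ wcl S) (hg : g ∈ wcl S) : f + g ∈ wcl S := by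
  have hc : Continuous fun p : WeakDual ℝ X × WeakDual ℝ X => p.1 + p.2 := continuous_add
  have hm : ((toWeakDual (𝕜 := ℝ) (E := X) f, toWeakDual (𝕜 := ℝ) (E := X) g) :
      WeakDual ℝ X × WeakDual ℝ X)
      ∈ closure ((toWeakDual (𝕜 := ℝ) (E := X) '' S) ×ˢ (toWeakDual (𝕜 := ℝ) (E := X) '' S)) := by
    rw [closure_prod_eq]; exact ⟨hf, hg⟩
  have h2 := image_closure_subset_closure_image hc (Set.mem_image_of_mem _ hm)
  show toWeakDual (𝕜 := ℝ) (E := X) (f + g) ∈ closure (toWeakDual (𝕜 := ℝ) (E := X) '' S)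
  refine closure_mono ?_ h2
  rintro _ ⟨⟨a, b⟩, ⟨⟨u, hu, rfl⟩, ⟨v, hv, rfl⟩⟩, rfl⟩
  exact Set.mem_image_of_mem _ (hS u hu v hv)

theorem wcl_sep {S : Set (X →L[ℝ] ℝ)} (hconv : Convex ℝ S) (h0 : (0 : X →L[ℝ] ℝ) ∈ S)
    {f : X →L[ℝ] ℝ} (hf : f ∉ wcl S) : ∃ x : X, (∀ g ∈ wcl S, g x ≤ 1) ∧ 1 < f x := by
  set T : Set (WeakDual ℝ X) := closure (toWeakDual (𝕜 := ℝ) (E := X) '' S) with hT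
  have himconv : Convex ℝ (toWeakDual (𝕜 := ℝ) (E := X) '' S) :=
    hconv.linear_image (toWeakDual (𝕜 := ℝ) (E := X)).toLinearMap
  have hTconv : Convex ℝ T := himconv.closure
  have hfT : toWeakDual (𝕜 := ℝ) (E := X) f ∉ T := hf
  obtain ⟨φ, u, hsep, hfu⟩ := geometric_hahn_banach_closed_point hTconv isClosed_closure hfT
  obtain ⟨x', hx'⟩ := my_weakdual_repr φ
  have h0T : (0 : WeakDual ℝ X) ∈ T := subset_closure ⟨0, h0, rfl⟩
  have hu0 : 0 < u := by
    have := hsep 0 h0T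
    rwa [map_zero] at this
  refine ⟨u⁻¹ • x', ?_, ?_⟩
  · intro g hg
    have h1 : g x' < u := by
      have := hsep (toWeakDual (𝕜 := ℝ) (E := X) g) hg
      rwa [hx'] at this
    have h2 : g (u⁻¹ • x') = u⁻¹ * g x' := by rw [map_smul]; rfl
    rw [h2]
    calc u⁻¹ * g x' ≤ u⁻¹ * u := mul_le_mul_of_nonneg_left h1.le (inv_nonneg.2 hu0.le)
    _ = 1 := inv_mul_cancel₀ hu0.ne'
  · have h1 : u < f x' := by rw [hx'] at hfu; exact hfu
    have h2 : f (u⁻¹ • x') = u⁻¹ * f x' := by rw [map_smul]; rfl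
    rw [h2]
    calc (1:ℝ) = u⁻¹ * u := (inv_mul_cancel₀ hu0.ne').symm
    _ < u⁻¹ * f x' := mul_lt_mul_of_pos_left h1 (inv_pos.2 hu0)

/-! ### Primal lemmas -/

lemma apply_le_norm (f : X →L[ℝ] ℝ) {b : X} (hb : ‖b‖ ≤ 1) : f b ≤ ‖f‖ := by
  calc f b ≤ ‖f b‖ := le_abs_self _
  _ ≤ ‖f‖ * ‖b‖ := f.le_opNorm b
  _ ≤ ‖f‖ * 1 := by nlinarith [norm_nonneg f, norm_nonneg b]
  _ = ‖f‖ := mul_one _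

lemma norm_le_of_forall_le {f : X →L[ℝ] ℝ} {C : ℝ} (hC : 0 ≤ C)
    (h : ∀ b : X, ‖b‖ ≤ 1 → f b ≤ C) : ‖f‖ ≤ C := by
  refine f.opNorm_le_bound hC ?_
  intro x
  rcases eq_or_ne x 0 with rfl | hx
  · simp
  · have hxn : 0 < ‖x‖ := norm_pos_iff.2 hx
    set b := ‖x‖⁻¹ • x with hb
    have hbn : ‖b‖ ≤ 1 := by
      rw [hb, norm_smul, norm_inv, norm_norm, inv_mul_cancel₀ hxn.ne']
    have h1 : f b ≤ C := h b hbn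
    have h2 : f (-b) ≤ C := by
      refine h (-b) ?_
      rwa [norm_neg]
    have habs : ‖f b‖ ≤ C := abs_le.2 ⟨by rw [map_neg] at h2; linarith, h1⟩
    have hfx : f x = ‖x‖ * f b := by
      rw [hb, map_smul, smul_eq_mul, ← mul_assoc, mul_inv_cancel₀ hxn.ne', one_mul]
    rw [hfx, norm_mul, norm_norm]
    calc ‖x‖ * ‖f b‖ ≤ ‖x‖ * C := mul_le_mul_of_nonneg_left habs hxn.le
    _ = C * ‖x‖ := mul_comm _ _

lemma pol_cone_nonpos {K : Set X} (hsmul : ∀ t : ℝ, 0 ≤ t → t • K ⊆ K)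
    {g : X →L[ℝ] ℝ} (hg : g ∈ pol K) {x : X} (hx : x ∈ K) : g x ≤ 0 := by
  by_contra hpos
  push_neg at hpos
  have h2 : (2 / g x) • x ∈ K := hsmul _ (by positivity) (smul_mem_smul_set hx)
  have := hg _ h2
  rw [map_smul, smul_eq_mul, div_mul_cancel₀ 2 hpos.ne'] at this
  norm_num at this

theorem mem_closure_of_pol {A : Set X} (hA : Convex ℝ A) (h0 : (0:X) ∈ A) {x : X}
    (hx : ∀ g ∈ pol A, g x ≤ 1) : x ∈ closure A := by
  by_contra hxc
  obtain ⟨f, u, hsep, hfu⟩ :=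
    geometric_hahn_banach_closed_point hA.closure isClosed_closure hxc
  have hu0 : 0 < u := by
    have := hsep 0 (subset_closure h0)
    rwa [map_zero] at this
  have hmem : u⁻¹ • f ∈ pol A := by
    intro a ha
    have h1 : f a < u := hsep a (subset_closure ha)
    show u⁻¹ • f a ≤ 1
    rw [smul_eq_mul]
    calc u⁻¹ * f a ≤ u⁻¹ * u := mul_le_mul_of_nonneg_left h1.le (inv_nonneg.2 hu0.le)
    _ = 1 := inv_mul_cancel₀ hu0.ne'
  have hle := hx _ hmem
  have h2 : (u⁻¹ • f) x = u⁻¹ * f x := rfl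
  rw [h2] at hle
  have hgt : (1:ℝ) < u⁻¹ * f x := by
    calc (1:ℝ) = u⁻¹ * u := (inv_mul_cancel₀ hu0.ne').symm
    _ < u⁻¹ * f x := mul_lt_mul_of_pos_left hfu (inv_pos.2 hu0)
  linarith

lemma pol_add_ball {K : Set X} (hsmul : ∀ t : ℝ, 0 ≤ t → t • K ⊆ K) (h0 : (0:X) ∈ K)
    {η : ℝ} (hη : 0 < η) :
    pol (K + η • closedBall (0:X) 1) = pol K ∩ closedBall (0 : X →L[ℝ] ℝ) (1/η) := by
  ext g
  constructor
  · intro hg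
    constructor
    · intro k hk
      have : k + η • (0:X) ∈ K + η • closedBall (0:X) 1 :=
        Set.add_mem_add hk (smul_mem_smul_set (mem_closedBall_self zero_le_one))
      have h1 := hg _ this
      rwa [smul_zero, add_zero] at h1
    · rw [mem_closedBall_zero_iff]
      refine norm_le_of_forall_le (by positivity) ?_
      intro b hb
      have : (0:X) + η • b ∈ K + η • closedBall (0:X) 1 :=
        Set.add_mem_add h0 (smul_mem_smul_set (by rwa [mem_closedBall_zero_iff]))
      have h1 := hg _ this
      rw [zero_add, map_smul, smul_eq_mul] at h1
      rw [le_div_iff₀ hη, mul_comm]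
      exact h1
  · rintro ⟨hgK, hgB⟩ x hx
    rw [mem_closedBall_zero_iff] at hgB
    obtain ⟨k, hk, y, hy, rfl⟩ := hx
    obtain ⟨b, hb, rfl⟩ := hy
    rw [mem_closedBall_zero_iff] at hb
    have h1 : g k ≤ 0 := pol_cone_nonpos hsmul hgK hk
    have h2 : g (η • b) = η * g b := by rw [map_smul, smul_eq_mul]
    have h3 : g b ≤ 1/η := le_trans (apply_le_norm g hb) hgB
    have h4 : η * g b ≤ η * (1/η) := mul_le_mul_of_nonneg_left h3 hη.le
    rw [mul_one_div, div_self hη.ne'] at h4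
    rw [map_add, h2]
    linarith

lemma closure_add_ball_subset {K : Set X} {η' η : ℝ} (hη' : 0 ≤ η') (hlt : η' < η) :
    closure (K + η' • closedBall (0:X) 1) ⊆ K + η • closedBall (0:X) 1 := by
  intro y hy
  have hpos : 0 < η - η' := by linarith
  obtain ⟨z, hz, hdist⟩ := Metric.mem_closure_iff.1 hy (η - η') hpos
  obtain ⟨k, hk, w, hw, rfl⟩ := hz
  obtain ⟨b, hb, rfl⟩ := hw
  rw [mem_closedBall_zero_iff] at hb
  have hηpos : 0 < η := lt_of_le_of_lt hη' hlt
  refine ⟨k, hk, η • (η⁻¹ • (y - k)), smul_mem_smul_set ?_, ?_⟩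
  · rw [mem_closedBall_zero_iff, norm_smul, norm_inv, Real.norm_eq_abs, abs_of_pos hηpos]
    rw [inv_mul_le_iff₀ hηpos, mul_one]
    have hdecomp : y - k = (y - (k + η' • b)) + η' • b := by abel
    have htri : ‖y - k‖ ≤ ‖y - (k + η' • b)‖ + ‖η' • b‖ := by
      rw [hdecomp]; exact norm_add_le _ _
    have hnb : ‖η' • b‖ ≤ η' := by
      rw [norm_smul, Real.norm_eq_abs, abs_of_nonneg hη']
      nlinarith
    have hd : dist y (k + η' • b) < η - η' := hdist
    rw [dist_eq_norm] at hd
    linarith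
  · show k + η • (η⁻¹ • (y - k)) = y
    rw [smul_inv_smul₀ hηpos.ne', add_comm, sub_add_cancel]

lemma mem_closure_add_ball_of_dual {D : Set X} (hconv : Convex ℝ D) (h0 : (0:X) ∈ D)
    (hsmul : ∀ t : ℝ, 0 ≤ t → t • D ⊆ D) {x : X} {ρ ρ' : ℝ} (hρ : 0 ≤ ρ) (hlt : ρ < ρ')
    (hx : ∀ f : X →L[ℝ] ℝ, ‖f‖ ≤ 1 → (∀ d ∈ D, f d ≤ 0) → f x ≤ ρ) :
    x ∈ closure (D + ρ' • closedBall (0:X) 1) := by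
  by_contra hxc
  have hρ' : 0 < ρ' := lt_of_le_of_lt hρ hlt
  have hcc : Convex ℝ (closure (D + ρ' • closedBall (0:X) 1)) :=
    (hconv.add ((convex_closedBall (0:X) 1).smul ρ')).closure
  obtain ⟨f, u, hsep, hfu⟩ := geometric_hahn_banach_closed_point hcc isClosed_closure hxc
  have hmem0 : (0:X) ∈ D + ρ' • closedBall (0:X) 1 :=
    ⟨0, h0, ρ' • 0, smul_mem_smul_set (mem_closedBall_self zero_le_one), by simp⟩
  have hu0 : 0 < u := by
    have := hsep 0 (subset_closure hmem0)
    rwa [map_zero] at this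
  have hfD : ∀ d ∈ D, f d ≤ 0 := by
    intro d hd
    by_contra hpos
    push_neg at hpos
    have h2 : (2 * u / f d) • d ∈ D := hsmul _ (by positivity) (smul_mem_smul_set hd)
    have h3 : (2 * u / f d) • d + ρ' • (0:X) ∈ D + ρ' • closedBall (0:X) 1 :=
      Set.add_mem_add h2 (smul_mem_smul_set (mem_closedBall_self zero_le_one))
    have := hsep _ (subset_closure h3)
    rw [smul_zero, add_zero, map_smul, smul_eq_mul, div_mul_cancel₀ (2*u) hpos.ne'] at this
    linarith
  have hnf : ρ' * ‖f‖ ≤ u := by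
    have hb : ∀ b : X, ‖b‖ ≤ 1 → f b ≤ u / ρ' := by
      intro b hb
      have h3 : (0:X) + ρ' • b ∈ D + ρ' • closedBall (0:X) 1 :=
        Set.add_mem_add h0 (smul_mem_smul_set (by rwa [mem_closedBall_zero_iff]))
      have := hsep _ (subset_closure h3)
      rw [zero_add, map_smul, smul_eq_mul] at this
      rw [le_div_iff₀ hρ', mul_comm]
      exact this.le
    have := norm_le_of_forall_le (by positivity) hb
    rw [le_div_iff₀ hρ'] at this
    linarith [this]
  have hfne : 0 < ‖f‖ := by
    by_contra h
    push_neg at h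
    have hf0 : f = 0 := norm_le_zero_iff.1 h
    rw [hf0] at hfu
    simp at hfu
    linarith
  have hns : ‖(‖f‖⁻¹ : ℝ) • f‖ = ‖(‖f‖⁻¹ : ℝ)‖ * ‖f‖ := norm_smul ‖f‖⁻¹ f
  have hnorm1 : ‖‖f‖⁻¹ • f‖ ≤ 1 := by
    rw [hns, norm_inv, norm_norm, inv_mul_cancel₀ hfne.ne']
  have hkey := hx (‖f‖⁻¹ • f) hnorm1
    (by
      intro d hd
      have := hfD d hd
      show ‖f‖⁻¹ • f d ≤ 0
      rw [smul_eq_mul]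
      exact mul_nonpos_of_nonneg_of_nonpos (inv_nonneg.2 hfne.le) this)
  have h5 : (‖f‖⁻¹ • f) x = ‖f‖⁻¹ * f x := rfl
  rw [h5] at hkey
  have h6 : ρ' * ‖f‖ < f x := lt_of_le_of_lt hnf hfu
  have h7 : ρ' < ‖f‖⁻¹ * f x := by
    have h8 := mul_lt_mul_of_pos_left h6 (inv_pos.2 hfne)
    rwa [show ‖f‖⁻¹ * (ρ' * ‖f‖) = ρ' * (‖f‖⁻¹ * ‖f‖) by ring,
      inv_mul_cancel₀ hfne.ne', mul_one] at h8
  linarith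

/-! ### recCone and invSum basics -/

lemma recCone_subset {Y : Type*} [AddCommGroup Y] [Module ℝ Y] {S : Set Y} (h0 : (0:Y) ∈ S) :
    recCone S ⊆ S := by
  intro x hx
  have := hx 1 zero_le_one 0 h0
  simpa using this

lemma zero_mem_recCone {Y : Type*} [AddCommGroup Y] [Module ℝ Y] {S : Set Y} :
    (0:Y) ∈ recCone S := by
  intro t ht a ha
  simpa using ha

lemma mem_recCone_of_closed {Y : Type*} [AddCommGroup Y] [Module ℝ Y] {S : Set Y}
    (hadd : ∀ u ∈ S, ∀ v ∈ S, u + v ∈ S)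
    (hsmul : ∀ t : ℝ, 0 < t → ∀ u ∈ S, t • u ∈ S) {x : Y} (hx : x ∈ S) : x ∈ recCone S := by
  intro t ht a ha
  rcases eq_or_lt_of_le ht with rfl | htpos
  · simpa using ha
  · exact hadd a ha _ (hsmul t htpos x hx)

lemma recCone_univ {Y : Type*} [AddCommGroup Y] [Module ℝ Y] :
    recCone (Set.univ : Set Y) = Set.univ := by
  ext x; simp [recCone]

lemma smul_closedBall0 {Y : Type*} [NormedAddCommGroup Y] [NormedSpace ℝ Y]
    {s r : ℝ} (hs : 0 < s) (hr : 0 ≤ r) :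
    s • closedBall (0:Y) r = closedBall (0:Y) (s*r) := by
  ext x
  simp only [Set.mem_smul_set, mem_closedBall_zero_iff]
  constructor
  · rintro ⟨b, hb, rfl⟩
    have hn : ‖s • b‖ = ‖s‖ * ‖b‖ := norm_smul s b
    rw [hn, Real.norm_eq_abs, abs_of_pos hs]
    nlinarith
  · intro h
    refine ⟨s⁻¹ • x, ?_, smul_inv_smul₀ hs.ne' x⟩
    have hn : ‖s⁻¹ • x‖ = ‖s⁻¹‖ * ‖x‖ := norm_smul s⁻¹ x
    rw [hn, Real.norm_eq_abs, abs_of_pos (inv_pos.2 hs), inv_mul_le_iff₀ hs]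
    linarith

lemma zero_mem_pol (A : Set X) : (0 : X →L[ℝ] ℝ) ∈ pol A := by
  intro x _; simp

lemma pol_convex (A : Set X) : Convex ℝ (pol A) := by
  intro f hf g hg a b ha hb hab
  intro x hx
  have h1 : (a • f + b • g) x = a * f x + b * g x := rfl
  rw [h1]
  have := hf x hx; have := hg x hx
  nlinarith

lemma pol_smul_mem {K : Set X} (hsmul : ∀ t : ℝ, 0 ≤ t → t • K ⊆ K) {t : ℝ} (ht : 0 ≤ t)
    {g : X →L[ℝ] ℝ} (hg : g ∈ pol K) : t • g ∈ pol K := by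
  intro x hx
  have h1 : (t • g) x = t * g x := rfl
  rw [h1]
  have := pol_cone_nonpos hsmul hg hx
  nlinarith

lemma pol_add_mem {K : Set X} (hsmul : ∀ t : ℝ, 0 ≤ t → t • K ⊆ K)
    {g h : X →L[ℝ] ℝ} (hg : g ∈ pol K) (hh : h ∈ pol K) : g + h ∈ pol K := by
  intro x hx
  have h1 : (g + h) x = g x + h x := rfl
  rw [h1]
  have := pol_cone_nonpos hsmul hg hx
  have := pol_cone_nonpos hsmul hh hx
  linarith

lemma mem_recCone_pol {K : Set X} (hsmul : ∀ t : ℝ, 0 ≤ t → t • K ⊆ K)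
    {g : X →L[ℝ] ℝ} (hg : g ∈ pol K) : g ∈ recCone (pol K) :=
  mem_recCone_of_closed (fun _ hu _ hv => pol_add_mem hsmul hu hv)
    (fun t ht _ hu => pol_smul_mem hsmul ht.le hu) hg

lemma eval_halfspace_convex (x : X) (c : ℝ) : Convex ℝ {g : X →L[ℝ] ℝ | g x ≤ c} := by
  intro f hf g hg a b ha hb hab
  have h1 : (a • f + b • g) x = a * f x + b * g x := rfl
  show (a • f + b • g) x ≤ c
  rw [h1]
  simp only [Set.mem_setOf_eq] at hf hg
  have hsum : a*c + b*c = c := by rw [← add_mul, hab, one_mul]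
  nlinarith [mul_le_mul_of_nonneg_left hf ha, mul_le_mul_of_nonneg_left hg hb]

/-! ### invSum computations -/

lemma invSum_ball_subset {B₂ : Set (X →L[ℝ] ℝ)} (h0 : (0 : X →L[ℝ] ℝ) ∈ B₂)
    (hsm : ∀ t : ℝ, 0 < t → ∀ g ∈ B₂, t • g ∈ B₂) :
    invSum (closedBall (0 : X →L[ℝ] ℝ) 1) B₂ ⊆ closedBall (0 : X →L[ℝ] ℝ) 1 ∩ B₂ := by
  rintro g ((h | h) | h)
  · simp only [Set.mem_iUnion] at h
    obtain ⟨t, ⟨ht0, ht1⟩, hg1, hg2⟩ := h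
    constructor
    · rw [smul_closedBall0 ht0 zero_le_one, mul_one] at hg1
      exact closedBall_subset_closedBall ht1.le hg1
    · obtain ⟨h, hh, rfl⟩ := hg2
      exact hsm _ (by linarith) h hh
  · exact ⟨h.1, recCone_subset h0 h.2⟩
  · exact ⟨recCone_subset (mem_closedBall_self zero_le_one) h.2, h.1⟩

lemma inter_subset_invSum_ball {B₂ : Set (X →L[ℝ] ℝ)}
    (hadd : ∀ u ∈ B₂, ∀ v ∈ B₂, u + v ∈ B₂)
    (hsm : ∀ t : ℝ, 0 < t → ∀ g ∈ B₂, t • g ∈ B₂) :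
    closedBall (0 : X →L[ℝ] ℝ) 1 ∩ B₂ ⊆ invSum (closedBall (0 : X →L[ℝ] ℝ) 1) B₂ := by
  rintro g ⟨hb, hW⟩
  exact Or.inl (Or.inr ⟨hb, mem_recCone_of_closed hadd hsm hW⟩)

lemma invSum_pol_subset {K : Set X} (hsmul : ∀ t : ℝ, 0 ≤ t → t • K ⊆ K)
    {r : ℝ} (hr : 0 < r) :
    invSum (pol K) (r • closedBall (0 : X →L[ℝ] ℝ) 1) ⊆
      pol K ∩ closedBall (0 : X →L[ℝ] ℝ) r := by
  have hball : r • closedBall (0 : X →L[ℝ] ℝ) 1 = closedBall (0 : X →L[ℝ] ℝ) r := by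
    rw [smul_closedBall0 hr zero_le_one, mul_one]
  rintro g ((h | h) | h)
  · simp only [Set.mem_iUnion] at h
    obtain ⟨t, ⟨ht0, ht1⟩, hg1, hg2⟩ := h
    constructor
    · obtain ⟨h, hh, rfl⟩ := hg1
      exact pol_smul_mem hsmul ht0.le hh
    · rw [hball, smul_closedBall0 (by linarith : (0:ℝ) < 1 - t) hr.le] at hg2
      exact closedBall_subset_closedBall (by nlinarith) hg2
  · rw [hball] at h
    exact ⟨h.1, recCone_subset (mem_closedBall_self hr.le) h.2⟩
  · rw [hball] at h
    exact ⟨recCone_subset (zero_mem_pol K) h.2, h.1⟩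

lemma inter_subset_invSum_pol {K : Set X} (hsmul : ∀ t : ℝ, 0 ≤ t → t • K ⊆ K)
    {r : ℝ} (hr : 0 < r) :
    pol K ∩ closedBall (0 : X →L[ℝ] ℝ) r ⊆
      invSum (pol K) (r • closedBall (0 : X →L[ℝ] ℝ) 1) := by
  rintro g ⟨hg, hb⟩
  refine Or.inr ⟨?_, mem_recCone_pol hsmul hg⟩
  rw [smul_closedBall0 hr zero_le_one, mul_one]
  exact hb

lemma pol_subset_invSum_univ {K : Set X} :
    pol K ⊆ invSum (pol K) (Set.univ : Set (X →L[ℝ] ℝ)) := by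
  intro g hg
  refine Or.inl (Or.inr ⟨hg, ?_⟩)
  rw [recCone_univ]
  trivial

end Aux

/-! ### Cone family lemmas and the two main implications -/

section Main

variable {X : Type*} [NormedAddCommGroup X] [NormedSpace ℝ X]
variable {I : Type*} [Nonempty I] {K : I → Set X}

lemma cone_convex {A : Set X} (hsmul : ∀ t : ℝ, 0 ≤ t → t • A ⊆ A)
    (hadd : A + A ⊆ A) : Convex ℝ A := by
  intro p hp q hq a b ha hb _
  exact hadd (Set.add_mem_add (hsmul a ha (smul_mem_smul_set hp))
    (hsmul b hb (smul_mem_smul_set hq)))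

lemma Sc_zero_mem (K : I → Set X) :
    (0 : X →L[ℝ] ℝ) ∈ convexHull ℝ (⋃ i, pol (K i)) :=
  subset_convexHull ℝ _ (Set.mem_iUnion.2 ⟨Classical.arbitrary I, zero_mem_pol _⟩)

lemma Sc_smul (hcone_smul : ∀ i, ∀ t : ℝ, 0 ≤ t → t • K i ⊆ K i) :
    ∀ t : ℝ, 0 < t → ∀ g ∈ convexHull ℝ (⋃ i, pol (K i)),
      t • g ∈ convexHull ℝ (⋃ i, pol (K i)) := by
  intro t ht g hg
  have h1 : t • g ∈ t • convexHull ℝ (⋃ i, pol (K i)) := smul_mem_smul_set hg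
  rw [← convexHull_smul] at h1
  refine convexHull_mono ?_ h1
  rw [Set.smul_set_iUnion]
  refine Set.iUnion_subset fun i => ?_
  rintro u ⟨v, hv, rfl⟩
  exact Set.mem_iUnion.2 ⟨i, pol_smul_mem (hcone_smul i) ht.le hv⟩

lemma Sc_add (hcone_smul : ∀ i, ∀ t : ℝ, 0 ≤ t → t • K i ⊆ K i) :
    ∀ u ∈ convexHull ℝ (⋃ i, pol (K i)), ∀ v ∈ convexHull ℝ (⋃ i, pol (K i)),
      u + v ∈ convexHull ℝ (⋃ i, pol (K i)) := by
  intro u hu v hv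
  have hmid : (1/2 : ℝ) • u + (1/2 : ℝ) • v ∈ convexHull ℝ (⋃ i, pol (K i)) :=
    (convex_convexHull ℝ _) hu hv (by norm_num) (by norm_num) (by norm_num)
  have h2 := Sc_smul hcone_smul 2 (by norm_num) _ hmid
  have h3 : (2:ℝ) • ((1/2 : ℝ) • u + (1/2 : ℝ) • v) = u + v := by
    rw [smul_add, smul_smul, smul_smul]
    norm_num
  rwa [h3] at h2

lemma step1 (hcone_smul : ∀ i, ∀ t : ℝ, 0 ≤ t → t • K i ⊆ K i)
    (hcone_add : ∀ i, K i + K i ⊆ K i) (h0 : ∀ i, (0 : X) ∈ K i)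
    {η η' : ℝ} (hη' : 0 ≤ η') (hlt : η' < η)
    (hN : (⋂ i, (K i + η • closedBall (0:X) 1)) ⊆ (⋂ i, K i) + closedBall (0:X) 1) :
    invSum (closedBall (0 : X →L[ℝ] ℝ) 1) (wcl (convexHull ℝ (⋃ i, pol (K i)))) ⊆
      wcl (convexHull ℝ (⋃ i, invSum (pol (K i))
        (if η' = 0 then Set.univ else (1 / η') • closedBall (0 : X →L[ℝ] ℝ) 1))) := by
  intro f hf
  have hf' : f ∈ closedBall (0 : X →L[ℝ] ℝ) 1 ∩ wcl (convexHull ℝ (⋃ i, pol (K i))) :=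
    invSum_ball_subset (subset_wcl _ (Sc_zero_mem K))
      (fun t ht g hg => smul_mem_wcl (Sc_smul hcone_smul) ht hg) hf
  obtain ⟨hfB, hfW⟩ := hf'
  rcases eq_or_lt_of_le hη' with rfl | hη'pos
  · rw [if_pos rfl]
    exact wcl_mono (convexHull_mono (Set.iUnion_mono fun i => pol_subset_invSum_univ)) hfW
  · rw [if_neg hη'pos.ne']
    by_contra hfR
    have h0R : (0 : X →L[ℝ] ℝ) ∈ convexHull ℝ (⋃ i, invSum (pol (K i))
        ((1/η') • closedBall (0 : X →L[ℝ] ℝ) 1)) := by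
      refine subset_convexHull ℝ _ (Set.mem_iUnion.2 ⟨Classical.arbitrary I, ?_⟩)
      exact Or.inl (Or.inr ⟨zero_mem_pol _, zero_mem_recCone⟩)
    obtain ⟨x, hx1, hx2⟩ := wcl_sep (convex_convexHull ℝ _) h0R hfR
    have hxK : ∀ i, x ∈ K i + η • closedBall (0:X) 1 := by
      intro i
      have hKconv : Convex ℝ (K i) := cone_convex (hcone_smul i) (hcone_add i)
      have hAconv : Convex ℝ (K i + η' • closedBall (0:X) 1) :=
        hKconv.add ((convex_closedBall (0:X) 1).smul η')
      have hA0 : (0:X) ∈ K i + η' • closedBall (0:X) 1 :=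
        ⟨0, h0 i, η' • 0, smul_mem_smul_set (mem_closedBall_self zero_le_one), by simp⟩
      have hxcl : x ∈ closure (K i + η' • closedBall (0:X) 1) := by
        refine mem_closure_of_pol hAconv hA0 ?_
        intro g hg
        rw [pol_add_ball (hcone_smul i) (h0 i) hη'pos] at hg
        have hginv : g ∈ invSum (pol (K i)) ((1/η') • closedBall (0 : X →L[ℝ] ℝ) 1) :=
          inter_subset_invSum_pol (hcone_smul i) (by positivity) hg
        exact hx1 g (subset_wcl _ (subset_convexHull ℝ _ (Set.mem_iUnion.2 ⟨i, hginv⟩)))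
      exact closure_add_ball_subset hη' hlt hxcl
    have hxmem : x ∈ (⋂ i, K i) + closedBall (0:X) 1 := hN (Set.mem_iInter.2 hxK)
    obtain ⟨k, hk, b, hb, rfl⟩ := hxmem
    have hfk : f k ≤ 0 := by
      have hbound : ∀ g ∈ convexHull ℝ (⋃ i, pol (K i)), g k ≤ 0 := by
        intro g hg
        have hsub : convexHull ℝ (⋃ i, pol (K i)) ⊆ {h : X →L[ℝ] ℝ | h k ≤ 0} := by
          refine convexHull_min (Set.iUnion_subset fun i g' hg' => ?_) (eval_halfspace_convex k 0)
          exact pol_cone_nonpos (hcone_smul i) hg' (Set.mem_iInter.1 hk i)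
        exact hsub hg
      exact wcl_forall_le hbound f hfW
    have hfb : f b ≤ 1 :=
      le_trans (apply_le_norm f (mem_closedBall_zero_iff.1 hb)) (mem_closedBall_zero_iff.1 hfB)
    have hfadd : f (k + b) = f k + f b := map_add f k b
    rw [hfadd] at hx2
    linarith

lemma step2 (hcone_smul : ∀ i, ∀ t : ℝ, 0 ≤ t → t • K i ⊆ K i)
    (hcone_add : ∀ i, K i + K i ⊆ K i) (h0 : ∀ i, (0 : X) ∈ K i)
    (hcip : closure (⋂ i, K i) = ⋂ i, closure (K i))
    {η η' : ℝ} (hη' : 0 ≤ η') (hlt : η' < η)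
    (hD : invSum (closedBall (0 : X →L[ℝ] ℝ) 1) (wcl (convexHull ℝ (⋃ i, pol (K i)))) ⊆
      wcl (convexHull ℝ (⋃ i, invSum (pol (K i)) ((1/η) • closedBall (0 : X →L[ℝ] ℝ) 1)))) :
    (⋂ i, (K i + η' • closedBall (0:X) 1)) ⊆ (⋂ i, K i) + closedBall (0:X) 1 := by
  have hηpos : 0 < η := lt_of_le_of_lt hη' hlt
  have hDconv : Convex ℝ (⋂ i, K i) :=
    convex_iInter fun i => cone_convex (hcone_smul i) (hcone_add i)
  have hD0 : (0:X) ∈ ⋂ i, K i := Set.mem_iInter.2 h0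
  have hDsmul : ∀ t : ℝ, 0 ≤ t → t • (⋂ i, K i) ⊆ ⋂ i, K i := by
    intro t ht y hy
    obtain ⟨d, hd, rfl⟩ := hy
    refine Set.mem_iInter.2 fun i => hcone_smul i t ht (smul_mem_smul_set (Set.mem_iInter.1 hd i))
  intro x hx
  have hρ : (0:ℝ) ≤ η'/η := by positivity
  have hρ1 : η'/η < 1 := (div_lt_one hηpos).2 hlt
  have hdual : ∀ f : X →L[ℝ] ℝ, ‖f‖ ≤ 1 → (∀ d ∈ ⋂ i, K i, f d ≤ 0) → f x ≤ η'/η := by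
    intro f hfn hfD
    have hfW : f ∈ wcl (convexHull ℝ (⋃ i, pol (K i))) := by
      by_contra hfW
      obtain ⟨z, hz1, hz2⟩ := wcl_sep (convex_convexHull ℝ _) (Sc_zero_mem K) hfW
      have hzK : ∀ i, z ∈ closure (K i) := by
        intro i
        refine mem_closure_of_pol (cone_convex (hcone_smul i) (hcone_add i)) (h0 i) ?_
        intro g hg
        exact hz1 g (subset_wcl _ (subset_convexHull ℝ _ (Set.mem_iUnion.2 ⟨i, hg⟩)))
      have hzD : z ∈ closure (⋂ i, K i) := by rw [hcip]; exact Set.mem_iInter.2 hzK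
      have hfz : f z ≤ 0 := by
        have hcl : closure (⋂ i, K i) ⊆ {y : X | f y ≤ 0} :=
          closure_minimal (fun d hd => hfD d hd) (isClosed_le f.continuous continuous_const)
        exact hcl hzD
      linarith
    have hfI : f ∈ invSum (closedBall (0 : X →L[ℝ] ℝ) 1) (wcl (convexHull ℝ (⋃ i, pol (K i)))) :=
      inter_subset_invSum_ball
        (fun u hu v hv => add_mem_wcl (Sc_add hcone_smul) hu hv)
        (fun t ht g hg => smul_mem_wcl (Sc_smul hcone_smul) ht hg)
        ⟨mem_closedBall_zero_iff.2 hfn, hfW⟩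
    have hfR := hD hfI
    refine wcl_forall_le ?_ f hfR
    intro g hg
    have hsub : convexHull ℝ (⋃ i, invSum (pol (K i)) ((1/η) • closedBall (0 : X →L[ℝ] ℝ) 1)) ⊆
        {g : X →L[ℝ] ℝ | g x ≤ η'/η} := by
      refine convexHull_min (Set.iUnion_subset fun i g' hg' => ?_) (eval_halfspace_convex x (η'/η))
      have hg2 : g' ∈ pol (K i) ∩ closedBall (0 : X →L[ℝ] ℝ) (1/η) :=
        invSum_pol_subset (hcone_smul i) (by positivity) hg'
      obtain ⟨hgP, hgB⟩ := hg2
      have hxi := Set.mem_iInter.1 hx i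
      obtain ⟨k, hk, w, hw, hxe⟩ := hxi
      obtain ⟨b, hb, rfl⟩ := hw
      show g' x ≤ η'/η
      rw [← hxe, map_add]
      have h1 : g' k ≤ 0 := pol_cone_nonpos (hcone_smul i) hgP hk
      have h2 : g' (η' • b) = η' * g' b := by rw [map_smul, smul_eq_mul]
      have h3 : g' b ≤ 1/η :=
        le_trans (apply_le_norm g' (mem_closedBall_zero_iff.1 hb)) (mem_closedBall_zero_iff.1 hgB)
      have h4 : η' * g' b ≤ η' * (1/η) := mul_le_mul_of_nonneg_left h3 hη'
      rw [h2]
      have h5 : η' * (1/η) = η'/η := by ring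
      linarith
    exact hsub hg
  set ρ' : ℝ := (η'/η + 1)/2 with hρ'def
  have hρ'lt : η'/η < ρ' := by rw [hρ'def]; linarith
  have hρ'1 : ρ' < 1 := by rw [hρ'def]; linarith
  have hρ'pos : 0 < ρ' := by rw [hρ'def]; linarith
  have hxcl := mem_closure_add_ball_of_dual hDconv hD0 hDsmul hρ hρ'lt hdual
  obtain ⟨z, hz, hdist⟩ := Metric.mem_closure_iff.1 hxcl (1 - ρ') (by linarith)
  obtain ⟨d, hd, w, hw, rfl⟩ := hz
  obtain ⟨b, hb, rfl⟩ := hw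
  refine ⟨d, hd, x - d, ?_, ?_⟩
  · rw [mem_closedBall_zero_iff]
    have hdecomp : x - d = (x - (d + ρ' • b)) + ρ' • b := by abel
    have htri : ‖x - d‖ ≤ ‖x - (d + ρ' • b)‖ + ‖ρ' • b‖ := by
      rw [hdecomp]; exact norm_add_le _ _
    have hnb : ‖ρ' • b‖ ≤ ρ' := by
      rw [norm_smul, Real.norm_eq_abs, abs_of_pos hρ'pos]
      have := mem_closedBall_zero_iff.1 hb
      nlinarith
    have hd2 : dist x (d + ρ' • b) < 1 - ρ' := hdist
    rw [dist_eq_norm] at hd2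
    linarith
  · show d + (x - d) = x
    rw [add_comm, sub_add_cancel]

end Main

/-! ### sSup juggling -/

lemma unbdd_transfer {A B : Set ℝ}
    (hAB : ∀ η ∈ A, ∀ η', 0 ≤ η' → η' < η → η' ∈ B) (hA : ¬BddAbove A) : ¬BddAbove B := by
  rintro ⟨M, hM⟩
  obtain ⟨η, hηA, hηgt⟩ := not_bddAbove_iff.1 hA (max M 0 + 1)
  have h1 : (0:ℝ) ≤ max M 0 + 1/2 := by positivity
  have h2 : max M 0 + 1/2 < η := by
    have : max M 0 + 1/2 < max M 0 + 1 := by linarith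
    linarith
  have h3 := hAB η hηA _ h1 h2
  have h4 : max M 0 + 1/2 ≤ M := hM h3
  have h5 : M ≤ max M 0 := le_max_left _ _
  linarith

lemma sSup_le_of_transfer {S T : Set ℝ} (h0T : (0:ℝ) ∈ T) (hbS : BddAbove S)
    (hbT : BddAbove T) (hSne : S.Nonempty)
    (hST : ∀ η ∈ S, ∀ η', 0 ≤ η' → η' < η → η' ∈ T) :
    sSup S ≤ sSup T := by
  refine csSup_le hSne ?_
  intro η hη
  by_contra hgt
  push_neg at hgt
  have hTub : (0:ℝ) ≤ sSup T := le_csSup hbT h0T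
  have h1 : sSup T < (sSup T + η)/2 := by linarith
  have h2 : (sSup T + η)/2 < η := by linarith
  have h3 : (0:ℝ) ≤ (sSup T + η)/2 := by linarith
  have h4 := le_csSup hbT (hST η hη _ h3 h2)
  linarith

lemma sSup_eq_of_mutual {S T : Set ℝ} (h0S : (0:ℝ) ∈ S) (h0T : (0:ℝ) ∈ T)
    (hST : ∀ η ∈ S, ∀ η', 0 ≤ η' → η' < η → η' ∈ T)
    (hTS : ∀ η ∈ T, ∀ η', 0 ≤ η' → η' < η → η' ∈ S) :
    sSup S = sSup T := by
  by_cases hbS : BddAbove S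
  · by_cases hbT : BddAbove T
    · exact le_antisymm (sSup_le_of_transfer h0T hbS hbT ⟨0, h0S⟩ hST)
        (sSup_le_of_transfer h0S hbT hbS ⟨0, h0T⟩ hTS)
    · exact absurd hbS (unbdd_transfer hTS hbT)
  · have hbT : ¬BddAbove T := unbdd_transfer hST hbS
    rw [Real.sSup_of_not_bddAbove hbS, Real.sSup_of_not_bddAbove hbT]

theorem stmt14 {X : Type*} [NormedAddCommGroup X] [NormedSpace ℝ X] [CompleteSpace X]
    {I : Type*} [Nonempty I] (K : I → Set X)
    (hcone_smul : ∀ i, ∀ t : ℝ, 0 ≤ t → t • K i ⊆ K i)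
    (hcone_add : ∀ i, K i + K i ⊆ K i) (h0 : ∀ i, (0 : X) ∈ K i)
    (hcip : closure (⋂ i, K i) = ⋂ i, closure (K i)) :
    sSup {η : ℝ | 0 ≤ η ∧
        (⋂ i, (K i + η • closedBall (0:X) 1)) ⊆ (⋂ i, K i) + closedBall (0:X) 1} =
      sSup {η : ℝ | 0 ≤ η ∧
        invSum (closedBall (0 : X →L[ℝ] ℝ) 1) (wcl (convexHull ℝ (⋃ i, pol (K i)))) ⊆
          wcl (convexHull ℝ (⋃ i, invSum (pol (K i))
            (if η = 0 then Set.univ else (1 / η) • closedBall (0 : X →L[ℝ] ℝ) 1)))} := by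
  refine sSup_eq_of_mutual ?_ ?_ ?_ ?_
  · -- 0 ∈ setN
    refine ⟨le_refl 0, ?_⟩
    intro x hx
    have hxK : x ∈ ⋂ i, K i := by
      refine Set.mem_iInter.2 fun i => ?_
      have hxi := Set.mem_iInter.1 hx i
      obtain ⟨k, hk, w, hw, hxe⟩ := hxi
      obtain ⟨b, hb, rfl⟩ := hw
      have hxk : k = x := by simpa using hxe
      rwa [← hxk]
    exact ⟨x, hxK, 0, mem_closedBall_self zero_le_one, add_zero x⟩
  · -- 0 ∈ setD
    refine ⟨le_refl 0, ?_⟩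
    rw [if_pos rfl]
    intro f hf
    have hf' : f ∈ closedBall (0 : X →L[ℝ] ℝ) 1 ∩ wcl (convexHull ℝ (⋃ i, pol (K i))) :=
      invSum_ball_subset (subset_wcl _ (Sc_zero_mem K))
        (fun t ht g hg => smul_mem_wcl (Sc_smul hcone_smul) ht hg) hf
    exact wcl_mono (convexHull_mono (Set.iUnion_mono fun i => pol_subset_invSum_univ)) hf'.2
  · -- setN to setD
    rintro η ⟨hη0, hN⟩ η' hη'0 hlt
    exact ⟨hη'0, step1 hcone_smul hcone_add h0 hη'0 hlt hN⟩
  · -- setD to setN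
    rintro η ⟨hη0, hD⟩ η' hη'0 hlt
    rw [if_neg (lt_of_le_of_lt hη'0 hlt).ne'] at hD
    exact ⟨hη'0, step2 hcone_smul hcone_add h0 hcip hη'0 hlt hD⟩
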